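/- Let r > 2/3, let u_b ∈ (6/5, 4/3) satisfy K(u_b;r) = 0, and let s ∈ ℝ with s ≠ 2 and s ≠ u_b. Define h₁(u) = (2 − u)/(u − s) and h₂(u) = g(1 + √((r + u − 2)/(r + 1/10)), u)/(u − s). Then h₁(2) = 0, h₂(u_b) = 0, h₁ is differentiable at u = 2, h₂ is differentiable at u = u_b, and the two derivatives h₁′(2) and h₂′(u_b) are both negative if and only if s < u_b. (That is, the equilibria X₁ and X₂ of the slow subsystem are both sinks if and only if s < u_b(r).) -/

import Mathlib

noncomputable section

/-- Reaction term `g(q,u)` of the pipe-flow model. -/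
def gq (q u : ℝ) : ℝ := 2 - u + 2*q*(1 - u)

/-- The cubic `K(u;r)`. -/
def Kc (u r : ℝ) : ℝ := 40*u^3 - (50*r + 169)*u^2 + (160*r + 224)*u - 120*r - 96

theorem stmt3 (r ub s : ℝ) (hr : 2/3 < r) (hub : ub ∈ Set.Ioo (6/5 : ℝ) (4/3))
    (hK : Kc ub r = 0) (hs2 : s ≠ 2) (hsub : s ≠ ub) :
    let h1 : ℝ → ℝ := fun u => (2 - u) / (u - s)
    let h2 : ℝ → ℝ := fun u =>
      gq (1 + Real.sqrt ((r + u - 2) / (r + 1/10))) u / (u - s)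
    h1 2 = 0 ∧ h2 ub = 0 ∧
    DifferentiableAt ℝ h1 2 ∧ DifferentiableAt ℝ h2 ub ∧
    ((deriv h1 2 < 0 ∧ deriv h2 ub < 0) ↔ s < ub) := by
  intro h1 h2
  obtain ⟨hub1, hub2⟩ := hub
  have hB : (0:ℝ) < r + 1/10 := by linarith
  have hKe : 40*ub^3 - (50*r + 169)*ub^2 + (160*r + 224)*ub - 120*r - 96 = 0 := hK
  have E1 : 4*(ub-1)^2*(r+ub-2) = (4-3*ub)^2*(r+1/10) := by linear_combination hKe/10
  have hub1' : (0:ℝ) < ub - 1 := by linarith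
  have h43 : (0:ℝ) < 4 - 3*ub := by linarith
  have hA : 0 < r + ub - 2 := by nlinarith [sq_nonneg (4-3*ub), sq_nonneg (ub-1)]
  have hcpos : 0 < (r + ub - 2) / (r + 1/10) := div_pos hA hB
  set d : ℝ := (4 - 3*ub) / (2*(ub - 1)) with hd_def
  have hdpos : 0 < d := div_pos h43 (by linarith)
  have hceq : (r + ub - 2) / (r + 1/10) = d^2 := by
    have hu : ub - 1 ≠ 0 := ne_of_gt hub1'
    rw [hd_def, div_pow, div_eq_div_iff (ne_of_gt hB) (by positivity)]
    linear_combination E1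
  have hsq : Real.sqrt ((r + ub - 2) / (r + 1/10)) = d := by
    rw [hceq, Real.sqrt_sq hdpos.le]
  have hubs : ub - s ≠ 0 := sub_ne_zero.mpr (Ne.symm hsub)
  have h2s : (2:ℝ) - s ≠ 0 := sub_ne_zero.mpr (Ne.symm hs2)
  -- numerator of h2 vanishes at ub
  have hN0 : gq (1 + Real.sqrt ((r + ub - 2) / (r + 1/10))) ub = 0 := by
    rw [hsq]
    simp only [gq, hd_def]
    field_simp
    ring
  have h2ub : h2 ub = 0 := by
    show gq (1 + Real.sqrt ((r + ub - 2) / (r + 1/10))) ub / (ub - s) = 0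
    rw [hN0, zero_div]
  -- derivative of h1 at 2
  have hH1 : HasDerivAt h1 (((-1) * (2 - s) - (2 - 2) * 1) / (2 - s)^2) 2 := by
    have hnum : HasDerivAt (fun u : ℝ => 2 - u) (-1) 2 := by
      simpa using (hasDerivAt_id (2:ℝ)).const_sub 2
    have hden : HasDerivAt (fun u : ℝ => u - s) 1 2 := (hasDerivAt_id 2).sub_const s
    exact hnum.div hden h2s
  -- derivative of the square root term
  have hf : HasDerivAt (fun u : ℝ => (r + u - 2)/(r + 1/10)) (1/(r + 1/10)) ub := by
    have h : HasDerivAt (fun u : ℝ => (u + (r - 2))/(r + 1/10)) (1/(r + 1/10)) ub := by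
      simpa using ((hasDerivAt_id ub).add_const (r - 2)).div_const (r + 1/10)
    have heq : (fun u : ℝ => (r + u - 2)/(r + 1/10)) = fun u : ℝ => (u + (r - 2))/(r + 1/10) := by
      funext u; ring
    rw [heq]; exact h
  set t : ℝ := 1/(r + 1/10) / (2 * d) with ht_def
  have htpos : 0 < t := by positivity
  have hS : HasDerivAt (fun u : ℝ => Real.sqrt ((r + u - 2)/(r + 1/10))) t ub := by
    have := hf.sqrt (ne_of_gt hcpos)
    rwa [hsq] at this
  set nd : ℝ := -1 + (t * (1 - ub) + (1 + d) * -1) * 2 with hnd_def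
  have hNum : HasDerivAt (fun u : ℝ => gq (1 + Real.sqrt ((r + u - 2)/(r + 1/10))) u) nd ub := by
    have h1d : HasDerivAt (fun u : ℝ => 1 + Real.sqrt ((r + u - 2)/(r + 1/10))) t ub :=
      hS.const_add 1
    have h2d : HasDerivAt (fun u : ℝ => 1 - u) (-1) ub := by
      simpa using (hasDerivAt_id ub).const_sub 1
    have hP := (h1d.mul h2d).const_mul 2
    have hlin : HasDerivAt (fun u : ℝ => 2 - u) (-1) ub := by
      simpa using (hasDerivAt_id ub).const_sub 2
    have h := hlin.add hP
    have feq : (fun u : ℝ => gq (1 + Real.sqrt ((r + u - 2)/(r + 1/10))) u)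
        = fun u : ℝ => (2 - u) + 2*((1 + Real.sqrt ((r + u - 2)/(r + 1/10))) * (1 - u)) := by
      funext u; simp only [gq]; ring
    rw [feq]
    refine h.congr_deriv ?_
    rw [hnd_def, hsq]
    ring
  have hDen : HasDerivAt (fun u : ℝ => u - s) 1 ub := (hasDerivAt_id ub).sub_const s
  have hH2 : HasDerivAt h2
      ((nd * (ub - s) - gq (1 + Real.sqrt ((r + ub - 2)/(r + 1/10))) ub * 1) / (ub - s)^2) ub :=
    hNum.div hDen hubs
  -- derivative values
  have hd1v : deriv h1 2 = ((-1) * (2 - s) - (2 - 2) * 1) / (2 - s)^2 := hH1.deriv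
  have hd2v : deriv h2 ub = nd / (ub - s) := by
    rw [hH2.deriv, hN0]
    field_simp
    ring
  -- sign of nd
  have hnd_neg : nd < 0 := by
    have := mul_pos htpos hub1'
    nlinarith
  -- sign equivalences
  have hd1iff : deriv h1 2 < 0 ↔ s < 2 := by
    rw [hd1v]
    have he : ((-1) * (2 - s) - (2 - 2) * 1) / (2 - s)^2 = -(1/(2 - s)) := by
      field_simp
      ring
    rw [he, neg_lt_zero, one_div_pos]
    constructor <;> intro <;> linarith
  have hd2iff : deriv h2 ub < 0 ↔ s < ub := by
    rw [hd2v, div_neg_iff]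
    constructor
    · rintro (⟨_, h⟩ | ⟨_, h⟩) <;> linarith
    · intro h
      exact Or.inr ⟨hnd_neg, by linarith⟩
  refine ⟨by show ((2:ℝ) - 2)/(2 - s) = 0; norm_num, h2ub,
    hH1.differentiableAt, hH2.differentiableAt, ?_⟩
  constructor
  · rintro ⟨_, hb⟩
    exact hd2iff.mp hb
  · intro h
    exact ⟨hd1iff.mpr (by linarith), hd2iff.mpr h⟩
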